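/- Assume γ > 1, δ > 0, α₀ > 0, α₁ > 0, and α(τ) is a positive C² solution of α^{3γ-4} α_ττ − α^{3γ-5} (α_τ)² = δ with α(0)=α₀, α_τ(0)=α₀α₁. Then for all τ ≥ 0: β₁ α(τ) ≤ α_τ(τ) ≤ β₂ α(τ) and α₀ e^{β₁ τ} ≤ α(τ) ≤ α₀ e^{β₂ τ}, where β₁ = α₁ and β₂ = (α₁² + (2δ/(3γ-3)) α₀^{3-3γ})^{1/2}. -/

import Mathlib

/-- Exponential growth estimates for the rescaled expansion factor. -/
theorem stmt_5 (γ δ α₀ α₁ : ℝ) (hγ : 1 < γ) (hδ : 0 < δ) (hα₀ : 0 < α₀) (hα₁ : 0 < α₁)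
    (α : ℝ → ℝ) (hC2 : ContDiff ℝ 2 α)
    (hpos : ∀ τ, 0 ≤ τ → 0 < α τ)
    (hODE : ∀ τ, 0 ≤ τ →
      α τ ^ (3 * γ - 4) * deriv (deriv α) τ - α τ ^ (3 * γ - 5) * (deriv α τ) ^ 2 = δ)
    (h0 : α 0 = α₀) (h0' : deriv α 0 = α₀ * α₁) :
    ∀ τ, 0 ≤ τ →
      (α₁ * α τ ≤ deriv α τ ∧
        deriv α τ ≤ Real.sqrt (α₁ ^ 2 + 2 * δ / (3 * γ - 3) * α₀ ^ (3 - 3 * γ)) * α τ) ∧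
      (α₀ * Real.exp (α₁ * τ) ≤ α τ ∧
        α τ ≤ α₀ * Real.exp
          (Real.sqrt (α₁ ^ 2 + 2 * δ / (3 * γ - 3) * α₀ ^ (3 - 3 * γ)) * τ)) := by
  have hcont : Continuous α := hC2.continuous
  have hdiff : Differentiable ℝ α := hC2.differentiable (by norm_num)
  have hC2' : ContDiff ℝ ((1 : ℕ) + 1) α := by exact_mod_cast hC2
  have hC1d : ContDiff ℝ 1 (deriv α) := (contDiff_succ_iff_deriv.mp hC2').2.2
  have hdd : Differentiable ℝ (deriv α) := hC1d.differentiable one_ne_zero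
  have hγ3 : (0:ℝ) < 3 * γ - 3 := by linarith
  set w : ℝ → ℝ := fun s => deriv α s / α s with hw_def
  -- derivative of w at τ ≥ 0
  have hw : ∀ τ, 0 ≤ τ → HasDerivAt w (δ * α τ ^ (3 - 3 * γ)) τ := by
    intro τ hτ
    have ha : 0 < α τ := hpos τ hτ
    have hODEτ := hODE τ hτ
    have h1 : HasDerivAt (deriv α) (deriv (deriv α) τ) τ := (hdd τ).hasDerivAt
    have h2 : HasDerivAt α (deriv α τ) τ := (hdiff τ).hasDerivAt
    have hdv := h1.div h2 ha.ne'
    refine hdv.congr_deriv (Eq.symm ?_)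
    set a := α τ with ha_def
    set x := deriv α τ
    set y := deriv (deriv α) τ
    have k1 : a ^ (3 * γ - 4) = a ^ (3 * γ - 5) * a := by
      rw [show (3 * γ - 4) = (3 * γ - 5) + 1 by ring, Real.rpow_add_one ha.ne']
    have k2 : a ^ (3 - 3 * γ) * (a ^ (3 * γ - 5) * a ^ 2) = 1 := by
      rw [← Real.rpow_natCast a 2, ← Real.rpow_add ha, ← Real.rpow_add ha,
        show (3 - 3 * γ + (3 * γ - 5 + (2:ℕ))) = (0:ℝ) by push_cast; ring, Real.rpow_zero]
    rw [k1] at hODEτ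
    have hδ' : δ = a ^ (3 * γ - 5) * (a * y - x ^ 2) := by linarith [hODEτ]
    have ha2 : (a:ℝ) ^ 2 ≠ 0 := pow_ne_zero 2 ha.ne'
    rw [hδ', eq_div_iff ha2]
    linear_combination (a * y - x * x) * k2
  -- continuity of w on Ici 0
  have hwcont : ContinuousOn w (Set.Ici 0) := by
    apply ContinuousOn.div hC1d.continuous.continuousOn hcont.continuousOn
    exact fun s hs => (hpos s hs).ne'
  -- w is monotone on Ici 0
  have hwmono : MonotoneOn w (Set.Ici 0) := by
    apply monotoneOn_of_deriv_nonneg (convex_Ici 0) hwcont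
    · intro s hs
      rw [interior_Ici] at hs
      exact ((hw s (le_of_lt hs)).differentiableAt).differentiableWithinAt
    · intro s hs
      rw [interior_Ici] at hs
      rw [(hw s (le_of_lt hs)).deriv]
      have := Real.rpow_pos_of_pos (hpos s (le_of_lt hs)) (3 - 3 * γ)
      positivity
  have hw0 : w 0 = α₁ := by
    show deriv α 0 / α 0 = α₁
    rw [h0, h0']
    field_simp
  have hw_ge : ∀ τ, 0 ≤ τ → α₁ ≤ w τ := by
    intro τ hτ
    have := hwmono (Set.self_mem_Ici) hτ hτ
    rwa [hw0] at this
  -- energy is conserved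
  set E : ℝ → ℝ := fun s => w s ^ 2 + 2 * δ / (3 * γ - 3) * α s ^ (3 - 3 * γ) with hE_def
  have hE : ∀ τ, 0 ≤ τ → HasDerivAt E 0 τ := by
    intro τ hτ
    have ha : 0 < α τ := hpos τ hτ
    have h1 := (hw τ hτ).pow 2
    have h2 : HasDerivAt (fun s => α s ^ (3 - 3 * γ))
        (deriv α τ * (3 - 3 * γ) * α τ ^ (3 - 3 * γ - 1)) τ :=
      HasDerivAt.rpow_const ((hdiff τ).hasDerivAt) (Or.inl ha.ne')
    have h3 := h1.add (h2.const_mul (2 * δ / (3 * γ - 3)))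
    refine h3.congr_deriv (Eq.symm ?_)
    have k3 : α τ ^ (3 - 3 * γ - 1) = α τ ^ (3 - 3 * γ) / α τ := by
      rw [Real.rpow_sub ha, Real.rpow_one]
    rw [k3]
    show (0:ℝ) = 2 * w τ ^ (2 - 1) * (δ * α τ ^ (3 - 3 * γ)) +
      2 * δ / (3 * γ - 3) * (deriv α τ * (3 - 3 * γ) * (α τ ^ (3 - 3 * γ) / α τ))
    rw [hw_def]
    have e1 : 2 * δ / (3 * γ - 3) * (3 - 3 * γ) = -(2 * δ) := by
      rw [div_mul_eq_mul_div, show (3 - 3 * γ) = -(3 * γ - 3) by ring, mul_neg, neg_div,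
        mul_div_assoc, div_self hγ3.ne', mul_one]
    linear_combination (-(deriv α τ * α τ ^ (3 - 3 * γ) * (α τ)⁻¹)) * e1
  have hEconst : ∀ τ, 0 ≤ τ → E τ = E 0 := by
    have hEcont : ContinuousOn E (Set.Ici 0) := by
      apply ContinuousOn.add (hwcont.pow 2)
      exact ContinuousOn.mul continuousOn_const
        (ContinuousOn.rpow_const hcont.continuousOn (fun s hs => Or.inl (hpos s hs).ne'))
    have hEdiff : DifferentiableOn ℝ E (interior (Set.Ici (0:ℝ))) := by
      intro s hs
      rw [interior_Ici] at hs
      exact ((hE s (le_of_lt hs)).differentiableAt).differentiableWithinAt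
    have hd0 : ∀ s ∈ interior (Set.Ici (0:ℝ)), deriv E s = 0 := by
      intro s hs
      rw [interior_Ici] at hs
      exact (hE s (le_of_lt hs)).deriv
    have hm : MonotoneOn E (Set.Ici 0) :=
      monotoneOn_of_deriv_nonneg (convex_Ici 0) hEcont hEdiff
        (fun s hs => le_of_eq (hd0 s hs).symm)
    have ha : AntitoneOn E (Set.Ici 0) :=
      antitoneOn_of_deriv_nonpos (convex_Ici 0) hEcont hEdiff
        (fun s hs => le_of_eq (hd0 s hs))
    intro τ hτ
    exact le_antisymm (ha Set.self_mem_Ici hτ hτ) (hm Set.self_mem_Ici hτ hτ)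
  have hEval : ∀ τ, E τ = w τ ^ 2 + 2 * δ / (3 * γ - 3) * α τ ^ (3 - 3 * γ) :=
    fun τ => rfl
  set B : ℝ := α₁ ^ 2 + 2 * δ / (3 * γ - 3) * α₀ ^ (3 - 3 * γ) with hB_def
  have hE0 : E 0 = B := by rw [hEval, hw0, h0]
  have hM0 : 0 < 2 * δ / (3 * γ - 3) * α₀ ^ (3 - 3 * γ) :=
    mul_pos (div_pos (by linarith) hγ3) (Real.rpow_pos_of_pos hα₀ _)
  have hB_pos : 0 < B := by
    rw [hB_def]; nlinarith [sq_nonneg α₁, hM0]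
  set β₂ : ℝ := Real.sqrt B with hβ₂_def
  have hw_le : ∀ τ, 0 ≤ τ → w τ ≤ β₂ := by
    intro τ hτ
    have hEτ : w τ ^ 2 + 2 * δ / (3 * γ - 3) * α τ ^ (3 - 3 * γ) = B := by
      rw [← hEval, hEconst τ hτ, hE0]
    have hwpos : 0 < w τ := lt_of_lt_of_le hα₁ (hw_ge τ hτ)
    have hterm : 0 < 2 * δ / (3 * γ - 3) * α τ ^ (3 - 3 * γ) :=
      mul_pos (div_pos (by linarith) hγ3) (Real.rpow_pos_of_pos (hpos τ hτ) _)
    rw [hβ₂_def, Real.le_sqrt hwpos.le hB_pos.le]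
    clear_value B
    linarith [hEτ, hterm]
  have hβ₂pos : 0 < β₂ := Real.sqrt_pos.mpr hB_pos
  -- derivative bounds
  have hlow : ∀ τ, 0 ≤ τ → α₁ * α τ ≤ deriv α τ := by
    intro τ hτ
    have ha := hpos τ hτ
    have h1 : α₁ ≤ deriv α τ / α τ := hw_ge τ hτ
    calc α₁ * α τ ≤ (deriv α τ / α τ) * α τ := mul_le_mul_of_nonneg_right h1 ha.le
      _ = deriv α τ := by field_simp
  have hhigh : ∀ τ, 0 ≤ τ → deriv α τ ≤ β₂ * α τ := by
    intro τ hτ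
    have ha := hpos τ hτ
    have h1 : deriv α τ / α τ ≤ β₂ := hw_le τ hτ
    calc deriv α τ = (deriv α τ / α τ) * α τ := by field_simp
      _ ≤ β₂ * α τ := mul_le_mul_of_nonneg_right h1 ha.le
  -- exponential lower bound
  have hexp_low : ∀ τ, 0 ≤ τ → α₀ * Real.exp (α₁ * τ) ≤ α τ := by
    intro τ hτ
    set f : ℝ → ℝ := fun s => α s * Real.exp (-α₁ * s) with hf_def
    have hfd : ∀ s, HasDerivAt f
        ((deriv α s - α₁ * α s) * Real.exp (-α₁ * s)) s := by
      intro s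
      have h1 : HasDerivAt (fun u : ℝ => Real.exp (-α₁ * u)) (Real.exp (-α₁ * s) * (-α₁)) s := by
        have h2 : HasDerivAt (fun u : ℝ => -α₁ * u) (-α₁) s := by
          simpa using (hasDerivAt_id s).const_mul (-α₁)
        exact h2.exp
      have := ((hdiff s).hasDerivAt).mul h1
      refine this.congr_deriv ?_
      ring
    have hmono : MonotoneOn f (Set.Ici 0) := by
      apply monotoneOn_of_deriv_nonneg (convex_Ici 0)
        (Continuous.continuousOn (by fun_prop))
      · exact fun s _ => ((hfd s).differentiableAt).differentiableWithinAt
      · intro s hs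
        rw [interior_Ici] at hs
        rw [(hfd s).deriv]
        have h1 := hlow s (le_of_lt hs)
        have h2 := Real.exp_pos (-α₁ * s)
        nlinarith
    have hmt : f 0 ≤ f τ := hmono Set.self_mem_Ici hτ hτ
    have h00 : f 0 = α₀ := by
      show α 0 * Real.exp (-α₁ * 0) = α₀
      rw [h0]; norm_num
    rw [h00] at hmt
    have hmt' : α₀ ≤ α τ * Real.exp (-α₁ * τ) := hmt
    have hexp : 0 < Real.exp (α₁ * τ) := Real.exp_pos _
    have hone : Real.exp (-α₁ * τ) * Real.exp (α₁ * τ) = 1 := by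
      rw [← Real.exp_add]; norm_num
    calc α₀ * Real.exp (α₁ * τ)
        ≤ (α τ * Real.exp (-α₁ * τ)) * Real.exp (α₁ * τ) :=
          mul_le_mul_of_nonneg_right hmt' hexp.le
      _ = α τ * (Real.exp (-α₁ * τ) * Real.exp (α₁ * τ)) := by ring
      _ = α τ := by rw [hone, mul_one]
  -- exponential upper bound
  have hexp_high : ∀ τ, 0 ≤ τ → α τ ≤ α₀ * Real.exp (β₂ * τ) := by
    intro τ hτ
    set f : ℝ → ℝ := fun s => α s * Real.exp (-β₂ * s) with hf_def
    have hfd : ∀ s, HasDerivAt f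
        ((deriv α s - β₂ * α s) * Real.exp (-β₂ * s)) s := by
      intro s
      have h1 : HasDerivAt (fun u : ℝ => Real.exp (-β₂ * u)) (Real.exp (-β₂ * s) * (-β₂)) s := by
        have h2 : HasDerivAt (fun u : ℝ => -β₂ * u) (-β₂) s := by
          simpa using (hasDerivAt_id s).const_mul (-β₂)
        exact h2.exp
      have := ((hdiff s).hasDerivAt).mul h1
      refine this.congr_deriv ?_
      ring
    have hanti : AntitoneOn f (Set.Ici 0) := by
      apply antitoneOn_of_deriv_nonpos (convex_Ici 0)
        (Continuous.continuousOn (by fun_prop))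
      · exact fun s _ => ((hfd s).differentiableAt).differentiableWithinAt
      · intro s hs
        rw [interior_Ici] at hs
        rw [(hfd s).deriv]
        have h1 := hhigh s (le_of_lt hs)
        have h2 := Real.exp_pos (-β₂ * s)
        nlinarith
    have hmt : f τ ≤ f 0 := hanti Set.self_mem_Ici hτ hτ
    have h00 : f 0 = α₀ := by
      show α 0 * Real.exp (-β₂ * 0) = α₀
      rw [h0]; norm_num
    rw [h00] at hmt
    have hmt' : α τ * Real.exp (-β₂ * τ) ≤ α₀ := hmt
    have hexp : 0 < Real.exp (β₂ * τ) := Real.exp_pos _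
    have hone : Real.exp (-β₂ * τ) * Real.exp (β₂ * τ) = 1 := by
      rw [← Real.exp_add]; norm_num
    calc α τ = α τ * (Real.exp (-β₂ * τ) * Real.exp (β₂ * τ)) := by rw [hone, mul_one]
      _ = (α τ * Real.exp (-β₂ * τ)) * Real.exp (β₂ * τ) := by ring
      _ ≤ α₀ * Real.exp (β₂ * τ) := mul_le_mul_of_nonneg_right hmt' hexp.le
  intro τ hτ
  exact ⟨⟨hlow τ hτ, hhigh τ hτ⟩, ⟨hexp_low τ hτ, hexp_high τ hτ⟩⟩
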